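/- arXiv:1902.00871 — 2 statements merged into one kernel-verified Lean document; each statement's English description precedes it below -/
import Mathlib

section
/- For any subset U ⊆ V of vertices of Γ, let μ(U) be the largest size of a collection of pairwise weakly compatible ΓW-partitions each based at some element of U, and let M(U) be the largest size of a collection of pairwise compatible ΓW-partitions each based at some element of U. Then μ(U) = M(U). -/
namespace GW

variable {V : Type*}

/-- `V^±`: the set of generators and their inverses, identified with `V × Bool`;
`(v, true)` is the generator `v` and `(v, false)` is `v⁻¹`. -/
abbrev Vpm (V : Type*) := V × Bool

/-- The inverse of an element of `V^±`. -/
def pinv (x : Vpm V) : Vpm V := (x.1, !x.2)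

/-- The link of a vertex: the set of vertices adjacent to it. -/
def lk (Γ : SimpleGraph V) (v : V) : Set V := {w | Γ.Adj v w}

/-- The star of a vertex: its link together with the vertex itself. -/
def st (Γ : SimpleGraph V) (v : V) : Set V := lk Γ v ∪ {v}

/-- A vertex is principal if no vertex has strictly larger link. -/
def Principal (Γ : SimpleGraph V) (v : V) : Prop := ¬ ∃ w : V, lk Γ v ⊂ lk Γ w

/-- The relation `u ∼ w`: `lk(u) ⊆ st(w)` and `lk(w) ⊆ st(u)`. -/
def Eqv (Γ : SimpleGraph V) (u w : V) : Prop :=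
  lk Γ u ⊆ st Γ w ∧ lk Γ w ⊆ st Γ u

/-- For `S ⊆ V`, the set `S^± ⊆ V^±` of elements with underlying vertex in `S`. -/
def pm (S : Set V) : Set (Vpm V) := {x | x.1 ∈ S}

/-- `u` and `w` lie in the same connected component of `Γ − lk(m)`
(the induced subgraph on the complement of the link of `m`). -/
def SameComp (Γ : SimpleGraph V) (m u w : V) : Prop :=
  ∃ (hu : u ∈ (lk Γ m)ᶜ) (hw : w ∈ (lk Γ m)ᶜ),
    (Γ.induce ((lk Γ m)ᶜ : Set V)).Reachable ⟨u, hu⟩ ⟨w, hw⟩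

/-- The vertex set of the connected component of `u` in `Γ − lk(m)`. -/
def comp (Γ : SimpleGraph V) (m u : V) : Set V := {w | SameComp Γ m u w}

/-- `U ⊆ V^±` is `m`-inseparable if `U = {u}` or `U = {u⁻¹}` for a vertex `u` whose
component in `Γ − lk(m)` is the single vertex `u`, or `U = C^±` for a component `C`
of `Γ − lk(m)` with more than one vertex. -/
def Inseparable (Γ : SimpleGraph V) (m : Vpm V) (U : Set (Vpm V)) : Prop :=
  (∃ u : V, comp Γ m.1 u = {u} ∧ (U = {(u, true)} ∨ U = {(u, false)})) ∨
  (∃ u : V, u ∈ (lk Γ m.1)ᶜ ∧ comp Γ m.1 u ≠ {u} ∧ U = pm (comp Γ m.1 u))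

/-- A `ΓW`-subset based at `m`: a union of `m`-inseparable subsets containing `m`
but not `m⁻¹`. -/
def GWSubset (Γ : SimpleGraph V) (m : Vpm V) (P : Set (Vpm V)) : Prop :=
  m ∈ P ∧ pinv m ∉ P ∧ ∀ x ∈ P, ∃ U : Set (Vpm V), Inseparable Γ m U ∧ x ∈ U ∧ U ⊆ P

/-- `P* = V^± ∖ lk(m)^± ∖ P`. -/
def pstar (Γ : SimpleGraph V) (m : Vpm V) (P : Set (Vpm V)) : Set (Vpm V) :=
  (pm (lk Γ m.1))ᶜ \ P

/-- A `ΓW`-partition `{P | P* | lk(m)^±}` based at `m`, recorded together with its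
base `m` and the side `P` containing `m`; both sides are `ΓW`-subsets with at least
two elements. -/
structure GWPartition (Γ : SimpleGraph V) where
  base : Vpm V
  P : Set (Vpm V)
  hP : GWSubset Γ base P
  hPstar : GWSubset Γ (pinv base) (pstar Γ base P)
  thickP : 2 ≤ P.ncard
  thickPstar : 2 ≤ (pstar Γ base P).ncard

/-- The side `P*` of a `ΓW`-partition. -/
def GWPartition.Pstar {Γ : SimpleGraph V} (Pa : GWPartition Γ) : Set (Vpm V) :=
  pstar Γ Pa.base Pa.P

/-- The (unordered) pair of sides of a `ΓW`-partition; two `ΓW`-partitions are equal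
as partitions exactly when they have the same sides. -/
def sidesOf {Γ : SimpleGraph V} (Pa : GWPartition Γ) : Set (Set (Vpm V)) :=
  {Pa.P, Pa.Pstar}

/-- A `ΓW`-partition splits a vertex `v` if `v` and `v⁻¹` lie in different sides. -/
def Splits {Γ : SimpleGraph V} (Pa : GWPartition Γ) (v : V) : Prop :=
  ((v, true) ∈ Pa.P ∧ (v, false) ∈ Pa.Pstar) ∨
  ((v, false) ∈ Pa.P ∧ (v, true) ∈ Pa.Pstar)

/-- Compatibility of `ΓW`-partitions: some pair of sides is disjoint, or the
underlying vertices of the bases are adjacent with different stars. -/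
def Compatible {Γ : SimpleGraph V} (Pa Qa : GWPartition Γ) : Prop :=
  (Pa.P ∩ Qa.P = ∅ ∨ Pa.P ∩ Qa.Pstar = ∅ ∨ Pa.Pstar ∩ Qa.P = ∅ ∨ Pa.Pstar ∩ Qa.Pstar = ∅) ∨
  (Γ.Adj Pa.base.1 Qa.base.1 ∧ st Γ Pa.base.1 ≠ st Γ Qa.base.1)

/-- Weak compatibility: some pair of sides is disjoint, or the underlying vertices of
the bases are adjacent (hence distinct). -/
def WeakCompatible {Γ : SimpleGraph V} (Pa Qa : GWPartition Γ) : Prop :=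
  (Pa.P ∩ Qa.P = ∅ ∨ Pa.P ∩ Qa.Pstar = ∅ ∨ Pa.Pstar ∩ Qa.P = ∅ ∨ Pa.Pstar ∩ Qa.Pstar = ∅) ∨
  Γ.Adj Pa.base.1 Qa.base.1

/-- A `ΓW`-partition is based at the vertex `u` if it is based at `u` or `u⁻¹`, i.e.
`lk(u)` equals the link of the recorded base and the partition separates `u` from
`u⁻¹`. -/
def BasedAtVtx {Γ : SimpleGraph V} (Pa : GWPartition Γ) (u : V) : Prop :=
  lk Γ u = lk Γ Pa.base.1 ∧ Splits Pa u

/-- `M(U)`: the largest size of a collection of pairwise distinct, pairwise compatible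
`ΓW`-partitions, each based at some element of `U`. -/
noncomputable def M (Γ : SimpleGraph V) (U : Set V) : ℕ :=
  sSup {k : ℕ | ∃ C : Finset (GWPartition Γ), C.card = k ∧
    (∀ Pa ∈ C, Pa.base.1 ∈ U) ∧
    (∀ Pa ∈ C, ∀ Qa ∈ C, Pa ≠ Qa → sidesOf Pa ≠ sidesOf Qa ∧ Compatible Pa Qa)}

/-- `μ(U)`: the largest size of a collection of pairwise distinct, pairwise weakly
compatible `ΓW`-partitions, each based at some element of `U`. -/
noncomputable def Mweak (Γ : SimpleGraph V) (U : Set V) : ℕ :=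
  sSup {k : ℕ | ∃ C : Finset (GWPartition Γ), C.card = k ∧
    (∀ Pa ∈ C, Pa.base.1 ∈ U) ∧
    (∀ Pa ∈ C, ∀ Qa ∈ C, Pa ≠ Qa → sidesOf Pa ≠ sidesOf Qa ∧ WeakCompatible Pa Qa)}

/-- The commutation relations defining the right-angled Artin group `A_Γ`. -/
def Rels (Γ : SimpleGraph V) : Set (FreeGroup V) :=
  {r | ∃ u w : V, Γ.Adj u w ∧
    r = FreeGroup.of u * FreeGroup.of w * (FreeGroup.of u)⁻¹ * (FreeGroup.of w)⁻¹}

/-- The right-angled Artin group `A_Γ`. -/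
abbrev RAAG (Γ : SimpleGraph V) := PresentedGroup (Rels Γ)

/-- The generator of `A_Γ` corresponding to a vertex. -/
def ofv (Γ : SimpleGraph V) (v : V) : RAAG Γ := PresentedGroup.of v

/-- The element of `A_Γ` corresponding to an element of `V^±`. -/
def gen (Γ : SimpleGraph V) (x : Vpm V) : RAAG Γ :=
  if x.2 then ofv Γ x.1 else (ofv Γ x.1)⁻¹

open scoped Classical in
/-- The image of the generator `v` under the Whitehead automorphism `φ(P, m)`. -/
noncomputable def whImage (Γ : SimpleGraph V) (P : Set (Vpm V)) (m : Vpm V) (v : V) :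
    RAAG Γ :=
  if (v, true) ∈ P ∧ (v, false) ∈ P then gen Γ m * ofv Γ v * (gen Γ m)⁻¹
  else if v ≠ m.1 ∧ (v, true) ∈ P ∧ (v, false) ∈ pstar Γ m P then ofv Γ v * (gen Γ m)⁻¹
  else if v ≠ m.1 ∧ (v, false) ∈ P ∧ (v, true) ∈ pstar Γ m P then gen Γ m * ofv Γ v
  else ofv Γ v

/-- `φ` is the Whitehead automorphism `φ(P, m)`: it sends each generator `v` to
`mvm⁻¹` if `v, v⁻¹ ∈ P`; to `vm⁻¹` if `v ∈ P`, `v⁻¹ ∈ P*`, `v ≠ m^{±1}`; to `mv` if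
`v⁻¹ ∈ P`, `v ∈ P*`, `v ≠ m^{±1}`; and to `v` otherwise. -/
def IsWhitehead (Γ : SimpleGraph V) (P : Set (Vpm V)) (m : Vpm V)
    (φ : MulAut (RAAG Γ)) : Prop :=
  ∀ v : V, φ (ofv Γ v) = whImage Γ P m v

/-- An automorphism is inner if it is conjugation by some group element. -/
def IsInner {G : Type*} [Group G] (φ : MulAut G) : Prop :=
  ∃ g : G, ∀ x, φ x = g * x * g⁻¹

/-- Two automorphisms commute as outer automorphisms iff their commutator is inner. -/
def CommuteOuter {G : Type*} [Group G] (φ ψ : MulAut G) : Prop :=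
  IsInner (φ * ψ * φ⁻¹ * ψ⁻¹)

/-- The subgroup of inner automorphisms. -/
def Inn (G : Type*) [Group G] : Subgroup (MulAut G) := (MulAut.conj : G →* MulAut G).range

instance innNormal (G : Type*) [Group G] : (Inn G).Normal := by
  constructor
  intro n hn φ
  obtain ⟨g, rfl⟩ := hn
  refine ⟨φ g, ?_⟩
  ext x
  simp [MulAut.conj, mul_assoc]

/-- The outer automorphism group `Out(G) = Aut(G)/Inn(G)`. -/
abbrev Out (G : Type*) [Group G] := MulAut G ⧸ Inn G

/-- The projection `Aut(G) → Out(G)`. -/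
def toOut (G : Type*) [Group G] : MulAut G →* Out G := QuotientGroup.mk' (Inn G)

/-! ### Auxiliary lemmas for stmt12 -/

section Aux

variable {V : Type*} {Γ : SimpleGraph V}

/-- shorthand: base vertex of a partition -/
def vx (Pa : GWPartition Γ) : V := Pa.base.1

lemma pm_compl (S : Set V) : (pm S)ᶜ = pm (Sᶜ) := rfl

lemma pm_inj {S T : Set V} (h : pm S = pm T) : S = T := by
  ext v
  have := Set.ext_iff.mp h (v, true)
  simpa [pm] using this

lemma sameComp_refl {m u : V} (hu : u ∈ (lk Γ m)ᶜ) : SameComp Γ m u u :=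
  ⟨hu, hu, SimpleGraph.Reachable.refl _⟩

lemma sameComp_symm {m u w : V} (h : SameComp Γ m u w) : SameComp Γ m w u := by
  obtain ⟨hu, hw, hr⟩ := h
  exact ⟨hw, hu, hr.symm⟩

lemma sameComp_trans {m u w t : V} (h : SameComp Γ m u w) (h' : SameComp Γ m w t) :
    SameComp Γ m u t := by
  obtain ⟨hu, hw, hr⟩ := h
  obtain ⟨hw', ht, hr'⟩ := h'
  exact ⟨hu, ht, hr.trans hr'⟩

lemma mem_comp_self {m u : V} (hu : u ∈ (lk Γ m)ᶜ) : u ∈ comp Γ m u := sameComp_refl hu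

lemma comp_eq_of_mem {m u w : V} (h : w ∈ comp Γ m u) : comp Γ m w = comp Γ m u := by
  ext t
  constructor
  · intro ht; exact sameComp_trans h ht
  · intro ht; exact sameComp_trans (sameComp_symm h) ht

lemma comp_subset_lk_compl {m u : V} : comp Γ m u ⊆ (lk Γ m)ᶜ := by
  intro w hw
  obtain ⟨_, hw, _⟩ := hw
  exact hw

lemma comp_self (m : V) : comp Γ m m = {m} := by
  have hm : m ∈ (lk Γ m)ᶜ := fun h => Γ.irrefl h
  ext w
  simp only [Set.mem_singleton_iff]
  constructor
  · rintro ⟨hm', hw, hr⟩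
    obtain ⟨p⟩ := hr
    cases p with
    | nil => rfl
    | cons h q =>
      exact absurd (SimpleGraph.comap_adj.mp h) (by
        intro hadj
        exact (Subtype.mem _ : _ ∈ (lk Γ m)ᶜ) hadj)
  · rintro rfl
    exact mem_comp_self hm

end Aux
section Aux2

variable {V : Type*} {Γ : SimpleGraph V}

lemma lk_subset_st (v : V) : lk Γ v ⊆ st Γ v := Set.subset_union_left

lemma self_mem_st (v : V) : v ∈ st Γ v := Set.mem_union_right _ rfl

lemma self_notMem_lk (v : V) : v ∉ lk Γ v := fun h => Γ.irrefl h

lemma mem_st_compl {v u : V} (h1 : u ∈ (lk Γ v)ᶜ) (h2 : u ≠ v) : u ∈ (st Γ v)ᶜ := by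
  intro hu
  rcases hu with h | h
  · exact h1 h
  · exact h2 h

lemma st_compl_subset_lk_compl {v : V} : (st Γ v)ᶜ ⊆ (lk Γ v)ᶜ :=
  Set.compl_subset_compl.mpr (lk_subset_st v)

lemma mem_lk_iff_adj {v u : V} : u ∈ lk Γ v ↔ Γ.Adj v u := Iff.rfl

lemma lk_eq_st_diff (v : V) : lk Γ v = st Γ v \ {v} := by
  ext w
  constructor
  · intro h
    exact ⟨lk_subset_st v h, fun hw => self_notMem_lk v (by rwa [Set.mem_singleton_iff.mp hw] at h)⟩
  · rintro ⟨h1, h2⟩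
    rcases h1 with h | h
    · exact h
    · exact absurd h h2

/-- walks in `Γ − lk v` between vertices other than `v` stay away from `v` -/
lemma walk_drop {v : V} : ∀ {a b : ((lk Γ v)ᶜ : Set V)},
    (Γ.induce ((lk Γ v)ᶜ : Set V)).Walk a b → ∀ (ha : a.1 ≠ v) (hb : b.1 ≠ v),
    (Γ.induce ((st Γ v)ᶜ : Set V)).Reachable ⟨a.1, mem_st_compl a.2 ha⟩ ⟨b.1, mem_st_compl b.2 hb⟩ := by
  intro a b p
  induction p with
  | nil =>
    intro ha hb
    exact SimpleGraph.Reachable.refl _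
  | @cons a c b h q ih =>
    intro ha hb
    have hadj : Γ.Adj a.1 c.1 := SimpleGraph.comap_adj.mp h
    have hc : c.1 ≠ v := fun hcv => a.2 (by rw [hcv] at hadj; exact hadj.symm)
    have step : (Γ.induce ((st Γ v)ᶜ : Set V)).Adj ⟨a.1, mem_st_compl a.2 ha⟩ ⟨c.1, mem_st_compl c.2 hc⟩ :=
      SimpleGraph.comap_adj.mpr hadj
    exact step.reachable.trans (ih hc hb)

lemma reach_mono {A B : Set V} (hAB : A ⊆ B) {a b : A}
    (h : (Γ.induce A).Reachable a b) :
    (Γ.induce B).Reachable ⟨a.1, hAB a.2⟩ ⟨b.1, hAB b.2⟩ := by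
  obtain ⟨p⟩ := h
  induction p with
  | nil => exact SimpleGraph.Reachable.refl _
  | @cons x y z h q ih =>
    have hadj : Γ.Adj x.1 y.1 := SimpleGraph.comap_adj.mp h
    have step : (Γ.induce B).Adj ⟨x.1, hAB x.2⟩ ⟨y.1, hAB y.2⟩ := SimpleGraph.comap_adj.mpr hadj
    exact step.reachable.trans ih

lemma reach_congr {A B : Set V} (hAB : A = B) {a b : V} (ha : a ∈ A) (hb : b ∈ A)
    (h : (Γ.induce A).Reachable ⟨a, ha⟩ ⟨b, hb⟩) :
    (Γ.induce B).Reachable ⟨a, hAB ▸ ha⟩ ⟨b, hAB ▸ hb⟩ := by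
  subst hAB
  exact h

lemma sameComp_iff_st {v a b : V} (ha : a ∈ (st Γ v)ᶜ) (hb : b ∈ (st Γ v)ᶜ) :
    SameComp Γ v a b ↔ (Γ.induce ((st Γ v)ᶜ : Set V)).Reachable ⟨a, ha⟩ ⟨b, hb⟩ := by
  constructor
  · rintro ⟨ha', hb', hr⟩
    obtain ⟨p⟩ := hr
    have hav : a ≠ v := fun h => ha (by rw [h]; exact self_mem_st v)
    have hbv : b ≠ v := fun h => hb (by rw [h]; exact self_mem_st v)
    exact walk_drop p hav hbv
  · intro h
    exact ⟨st_compl_subset_lk_compl ha, st_compl_subset_lk_compl hb,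
      reach_mono st_compl_subset_lk_compl h⟩

lemma comp_eq_st {v n u : V} (hst : st Γ n = st Γ v) (hu : u ∈ (st Γ v)ᶜ) :
    comp Γ v u = comp Γ n u := by
  have hcc : ((st Γ v)ᶜ : Set V) = (st Γ n)ᶜ := by rw [hst]
  have hu' : u ∈ (st Γ n)ᶜ := hcc ▸ hu
  ext w
  by_cases hw : w ∈ (st Γ v)ᶜ
  · have hw' : w ∈ (st Γ n)ᶜ := hcc ▸ hw
    show SameComp Γ v u w ↔ SameComp Γ n u w
    rw [sameComp_iff_st hu hw, sameComp_iff_st hu' hw']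
    constructor
    · intro h
      exact reach_congr hcc hu hw h
    · intro h
      exact reach_congr hcc.symm hu' hw' h
  · constructor
    · intro h
      exfalso
      have hwlk : w ∈ (lk Γ v)ᶜ := comp_subset_lk_compl h
      have hwv : w = v := by
        by_contra hne
        exact hw (mem_st_compl hwlk hne)
      have h2 : u ∈ comp Γ v w := by
        rw [comp_eq_of_mem h]
        exact mem_comp_self (st_compl_subset_lk_compl hu)
      rw [hwv, comp_self] at h2
      exact hu (by rw [Set.mem_singleton_iff.mp h2]; exact self_mem_st (Γ := Γ) v)
    · intro h
      exfalso
      have hwlk : w ∈ (lk Γ n)ᶜ := comp_subset_lk_compl h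
      have hwv : w = n := by
        by_contra hne
        exact (hcc ▸ hw : w ∉ (st Γ n)ᶜ) (mem_st_compl hwlk hne)
      have h2 : u ∈ comp Γ n w := by
        rw [comp_eq_of_mem h]
        exact mem_comp_self (st_compl_subset_lk_compl hu')
      rw [hwv, comp_self] at h2
      exact hu' (by rw [Set.mem_singleton_iff.mp h2]; exact self_mem_st (Γ := Γ) n)

end Aux2
section Aux3

variable {V : Type*} {Γ : SimpleGraph V}

lemma insep_subset_lk_compl {m : Vpm V} {U : Set (Vpm V)} (h : Inseparable Γ m U) :
    ∀ x ∈ U, x.1 ∈ (lk Γ m.1)ᶜ := by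
  intro x hx
  rcases h with ⟨u, hc, hU | hU⟩ | ⟨u, hu, _, hU⟩
  · rw [hU] at hx
    rw [Set.mem_singleton_iff.mp hx]
    have : u ∈ comp Γ m.1 u := by rw [hc]; rfl
    exact comp_subset_lk_compl this
  · rw [hU] at hx
    rw [Set.mem_singleton_iff.mp hx]
    have : u ∈ comp Γ m.1 u := by rw [hc]; rfl
    exact comp_subset_lk_compl this
  · rw [hU] at hx
    exact comp_subset_lk_compl hx

lemma gws_subset {m : Vpm V} {P : Set (Vpm V)} (h : GWSubset Γ m P) :
    P ⊆ pm ((lk Γ m.1)ᶜ) := by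
  intro x hx
  obtain ⟨U, hU, hxU, _⟩ := h.2.2 x hx
  exact insep_subset_lk_compl hU x hxU

/-- transfer of inseparability along star equality and total away from star -/
lemma insep_transfer {m m' : Vpm V} (hst : st Γ m'.1 = st Γ m.1) {U : Set (Vpm V)}
    (hU : Inseparable Γ m U) (hsub : ∀ x ∈ U, x.1 ∉ st Γ m.1) :
    Inseparable Γ m' U := by
  rcases hU with ⟨u, hc, hU⟩ | ⟨u, hu, hne, hUeq⟩
  · left
    refine ⟨u, ?_, hU⟩
    have husm : u ∉ st Γ m.1 := by
      rcases hU with hU | hU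
      · exact hsub (u, true) (by rw [hU]; rfl)
      · exact hsub (u, false) (by rw [hU]; rfl)
    rw [← comp_eq_st hst husm]
    exact hc
  · right
    have huU : (u, true) ∈ U := by
      rw [hUeq]
      exact mem_comp_self hu
    have husm : u ∉ st Γ m.1 := hsub (u, true) huU
    have hcomp : comp Γ m.1 u = comp Γ m'.1 u := comp_eq_st hst husm
    refine ⟨u, ?_, ?_, ?_⟩
    · exact st_compl_subset_lk_compl (by rw [hst]; exact husm)
    · rw [← hcomp]; exact hne
    · rw [← hcomp]; exact hUeq

/-- adjacent vertices both outside lk(m) are in the same multi-vertex component: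
elements of a GW-subset spread along components -/
lemma block_lemma {m : Vpm V} {Q : Set (Vpm V)} (hQ : GWSubset Γ m Q) {a b : V}
    (hab : Γ.Adj a b) (ha : a ∈ (lk Γ m.1)ᶜ) (hb : b ∈ (lk Γ m.1)ᶜ)
    {c d : Bool} (hx : (a, c) ∈ Q) : (b, d) ∈ Q := by
  have hsc : SameComp Γ m.1 a b := ⟨ha, hb, (SimpleGraph.comap_adj.mpr hab :
    (Γ.induce ((lk Γ m.1)ᶜ : Set V)).Adj ⟨a, ha⟩ ⟨b, hb⟩).reachable⟩
  obtain ⟨U, hU, hxU, hUQ⟩ := hQ.2.2 _ hx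
  rcases hU with ⟨u, hc, hU⟩ | ⟨u, hu, hne, hUeq⟩
  · exfalso
    have hau : a = u := by
      rcases hU with hU | hU <;> rw [hU] at hxU <;>
        exact congrArg Prod.fst (Set.mem_singleton_iff.mp hxU)
    have : b ∈ comp Γ m.1 u := by
      rw [← hau]
      rw [← comp_eq_of_mem (mem_comp_self ha)]
      exact hsc
    rw [hc] at this
    exact hab.ne (hau.trans (Set.mem_singleton_iff.mp this).symm)
  · apply hUQ
    rw [hUeq] at hxU ⊢
    have : a ∈ comp Γ m.1 u := hxU
    show b ∈ comp Γ m.1 u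
    rw [← comp_eq_of_mem this]
    exact hsc

end Aux3
section Aux4

variable {V : Type*} {Γ : SimpleGraph V}

/-- the side of a partition "oriented" by a boolean: `sideB Pa ε` is the side that
contains `(vx Pa, ε)`. -/
noncomputable def sideB (Pa : GWPartition Γ) (ε : Bool) : Set (Vpm V) :=
  if ε = Pa.base.2 then Pa.P else Pa.Pstar

lemma sideB_gws (Pa : GWPartition Γ) (ε : Bool) : GWSubset Γ (vx Pa, ε) (sideB Pa ε) := by
  unfold sideB
  split
  · next h =>
    have : Pa.base = (vx Pa, ε) := Prod.ext_iff.mpr ⟨rfl, h.symm⟩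
    rw [← this]
    exact Pa.hP
  · next h =>
    have hb : ε = !Pa.base.2 := by
      cases hPa : Pa.base.2 <;> cases hε : ε <;> simp_all
    have : pinv Pa.base = (vx Pa, ε) := by
      rw [hb]; rfl
    rw [← this]
    exact Pa.hPstar

lemma sideB_eq_or (Pa : GWPartition Γ) (ε : Bool) :
    sideB Pa ε = Pa.P ∨ sideB Pa ε = Pa.Pstar := by
  unfold sideB; split
  · exact Or.inl rfl
  · exact Or.inr rfl

lemma P_eq_sideB (Pa : GWPartition Γ) : Pa.P = sideB Pa Pa.base.2 := by
  unfold sideB; rw [if_pos rfl]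

lemma Pstar_eq_sideB (Pa : GWPartition Γ) : Pa.Pstar = sideB Pa (!Pa.base.2) := by
  unfold sideB; rw [if_neg (by cases Pa.base.2 <;> simp)]

lemma sidesOf_eq_sideB (Pa : GWPartition Γ) :
    sidesOf Pa = {sideB Pa true, sideB Pa false} := by
  unfold sidesOf sideB
  cases h : Pa.base.2 <;> simp [h]
  exact Set.pair_comm _ _

lemma base_mem_sideB (Pa : GWPartition Γ) (ε : Bool) : (vx Pa, ε) ∈ sideB Pa ε :=
  (sideB_gws Pa ε).1

lemma base_notMem_sideB (Pa : GWPartition Γ) (ε : Bool) : (vx Pa, !ε) ∉ sideB Pa ε :=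
  (sideB_gws Pa ε).2.1

lemma eq_base_of_mem_sideB {Pa : GWPartition Γ} {ε : Bool} {x : Vpm V}
    (hx : x ∈ sideB Pa ε) (h : x.1 = vx Pa) : x = (vx Pa, ε) := by
  have hx2 : x = (vx Pa, x.2) := Prod.ext_iff.mpr ⟨h, rfl⟩
  by_cases h2 : x.2 = ε
  · rw [hx2, h2]
  · exfalso
    have h3 : x.2 = !ε := Bool.eq_not_iff.mpr h2
    rw [hx2, h3] at hx
    exact base_notMem_sideB Pa ε hx

lemma sideB_subset (Pa : GWPartition Γ) (ε : Bool) :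
    sideB Pa ε ⊆ pm ((lk Γ (vx Pa))ᶜ) :=
  gws_subset (m := ((vx Pa, ε) : Vpm V)) (sideB_gws Pa ε)

lemma sideB_disjoint (Pa : GWPartition Γ) :
    sideB Pa true ∩ sideB Pa false = ∅ := by
  have h : Pa.P ∩ Pa.Pstar = ∅ := by
    apply Set.eq_empty_of_forall_notMem
    rintro x ⟨h1, h2⟩
    exact h2.2 h1
  rcases sideB_eq_or Pa true with ht | ht <;> rcases sideB_eq_or Pa false with hf | hf
  · exfalso
    have := base_mem_sideB Pa false
    rw [hf, ← ht] at this
    exact base_notMem_sideB Pa true (by simpa using this)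
  · rw [ht, hf]; exact h
  · rw [ht, hf, Set.inter_comm]; exact h
  · exfalso
    have := base_mem_sideB Pa false
    rw [hf, ← ht] at this
    exact base_notMem_sideB Pa true (by simpa using this)

lemma sideB_union (Pa : GWPartition Γ) :
    sideB Pa true ∪ sideB Pa false = pm ((lk Γ (vx Pa))ᶜ) := by
  have h : Pa.P ∪ Pa.Pstar = pm ((lk Γ (vx Pa))ᶜ) := by
    apply Set.Subset.antisymm
    · exact Set.union_subset (gws_subset Pa.hP) fun x hx => hx.1
    · intro x hx
      by_cases h : x ∈ Pa.P
      · exact Or.inl h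
      · exact Or.inr ⟨hx, h⟩
  rcases sideB_eq_or Pa true with ht | ht <;> rcases sideB_eq_or Pa false with hf | hf
  · exfalso
    have := base_mem_sideB Pa false
    rw [hf, ← ht] at this
    exact base_notMem_sideB Pa true (by simpa using this)
  · rw [ht, hf]; exact h
  · rw [ht, hf, Set.union_comm]; exact h
  · exfalso
    have := base_mem_sideB Pa false
    rw [hf, ← ht] at this
    exact base_notMem_sideB Pa true (by simpa using this)

/-- the part of a side away from the base vertex -/
noncomputable def partB (Pa : GWPartition Γ) (ε : Bool) : Set (Vpm V) :=
  {x ∈ sideB Pa ε | x.1 ≠ vx Pa}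

lemma partB_subset_sideB (Pa : GWPartition Γ) (ε : Bool) : partB Pa ε ⊆ sideB Pa ε :=
  fun _ hx => hx.1

lemma sideB_eq_partB (Pa : GWPartition Γ) (ε : Bool) :
    sideB Pa ε = partB Pa ε ∪ {(vx Pa, ε)} := by
  ext x
  constructor
  · intro hx
    by_cases h : x.1 = vx Pa
    · exact Or.inr (eq_base_of_mem_sideB hx h)
    · exact Or.inl ⟨hx, h⟩
  · rintro (hx | hx)
    · exact hx.1
    · rw [Set.mem_singleton_iff.mp hx]
      exact base_mem_sideB Pa ε

lemma partB_subset_mat (Pa : GWPartition Γ) (ε : Bool) :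
    partB Pa ε ⊆ pm ((st Γ (vx Pa))ᶜ) := by
  rintro x ⟨hx, hne⟩
  exact mem_st_compl (sideB_subset Pa ε hx) hne

lemma mat_subset_partB (Pa : GWPartition Γ) :
    pm ((st Γ (vx Pa))ᶜ) ⊆ partB Pa true ∪ partB Pa false := by
  intro x hx
  have h1 : x ∈ pm ((lk Γ (vx Pa))ᶜ) := st_compl_subset_lk_compl hx
  have h2 : x.1 ≠ vx Pa := fun h => hx (by rw [h]; exact self_mem_st (Γ := Γ) _)
  rw [← sideB_union] at h1
  rcases h1 with h | h
  · exact Or.inl ⟨h, h2⟩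
  · exact Or.inr ⟨h, h2⟩

lemma partB_disjoint (Pa : GWPartition Γ) : partB Pa true ∩ partB Pa false = ∅ := by
  apply Set.eq_empty_of_forall_notMem
  rintro x ⟨h1, h2⟩
  have := sideB_disjoint Pa
  exact Set.eq_empty_iff_forall_notMem.mp this x ⟨h1.1, h2.1⟩

lemma partB_compl (Pa : GWPartition Γ) {x : Vpm V} (hx : x ∈ pm ((st Γ (vx Pa))ᶜ))
    (ε : Bool) (h : x ∉ partB Pa ε) : x ∈ partB Pa (!ε) := by
  rcases mat_subset_partB Pa hx with h1 | h1 <;> cases ε <;> simp_all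

lemma partB_nonempty [Fintype V] (Pa : GWPartition Γ) (ε : Bool) : (partB Pa ε).Nonempty := by
  have hcard : 2 ≤ (sideB Pa ε).ncard := by
    rcases sideB_eq_or Pa ε with h | h <;> rw [h]
    · exact Pa.thickP
    · exact Pa.thickPstar
  have h1 : 1 < (sideB Pa ε).ncard := by omega
  obtain ⟨y, hy, hyne⟩ := Set.exists_ne_of_one_lt_ncard h1 ((vx Pa, ε) : Vpm V)
  refine ⟨y, hy, ?_⟩
  intro h
  exact hyne (eq_base_of_mem_sideB hy h)

end Aux4
section Aux5

variable {V : Type*} {Γ : SimpleGraph V}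

lemma gws_witness (Pa : GWPartition Γ) (ε : Bool) {x : Vpm V} (hx : x ∈ partB Pa ε) :
    ∃ U : Set (Vpm V), Inseparable Γ ((vx Pa, ε) : Vpm V) U ∧ x ∈ U ∧ U ⊆ partB Pa ε ∧
      ∀ y ∈ U, y.1 ∉ st Γ (vx Pa) := by
  obtain ⟨U, hU, hxU, hUs⟩ := (sideB_gws Pa ε).2.2 x hx.1
  have hvert : ∀ y ∈ U, y.1 ≠ vx Pa := by
    intro y hy
    rcases hU with ⟨u, hc, hUe⟩ | ⟨u, hu, hne, hUe⟩
    · have hxy : y.1 = x.1 := by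
        rcases hUe with hUe | hUe <;> rw [hUe] at hy hxU <;>
          rw [Set.mem_singleton_iff.mp hy, Set.mem_singleton_iff.mp hxU]
      rw [hxy]
      exact hx.2
    · intro hyv
      rw [hUe] at hy hxU
      have h1 : (y.1 : V) ∈ comp Γ (vx Pa) u := hy
      have h2 : (x.1 : V) ∈ comp Γ (vx Pa) u := hxU
      rw [hyv] at h1
      have : comp Γ (vx Pa) u = comp Γ (vx Pa) (vx Pa) := (comp_eq_of_mem h1).symm
      rw [comp_self] at this
      rw [this] at h2
      exact hx.2 (Set.mem_singleton_iff.mp h2)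
  have hst : ∀ y ∈ U, y.1 ∉ st Γ (vx Pa) := by
    intro y hy
    exact mem_st_compl (insep_subset_lk_compl hU y hy) (hvert y hy)
  exact ⟨U, hU, hxU, fun y hy => ⟨hUs hy, hvert y hy⟩, hst⟩

lemma rebase_gws (S : GWPartition Γ) (n : V) (h : st Γ n = st Γ (vx S)) (ε : Bool) :
    GWSubset Γ ((n, ε) : Vpm V) (partB S ε ∪ {(n, ε)}) := by
  refine ⟨Or.inr rfl, ?_, ?_⟩
  · rintro (h1 | h1)
    · have := partB_subset_mat S ε h1
      exact this (by show n ∈ st Γ (vx S); rw [← h]; exact self_mem_st n)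
    · have : ((n, !ε) : Vpm V) = (n, ε) := h1
      simpa using congrArg Prod.snd this
  · rintro x (hx | hx)
    · obtain ⟨U, hU, hxU, hUp, hUst⟩ := gws_witness S ε hx
      refine ⟨U, ?_, hxU, fun y hy => Or.inl (hUp hy)⟩
      exact insep_transfer (m := ((vx S, ε) : Vpm V)) (m' := ((n, ε) : Vpm V)) h hU hUst
    · rw [Set.mem_singleton_iff.mp hx]
      refine ⟨{(n, ε)}, ?_, rfl, fun y hy => Or.inr hy⟩
      left
      refine ⟨n, comp_self n, ?_⟩
      cases ε
      · exact Or.inr rfl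
      · exact Or.inl rfl

lemma rebase_pstar_eq (S : GWPartition Γ) (n : V) (h : st Γ n = st Γ (vx S)) :
    pstar Γ ((n, true) : Vpm V) (partB S true ∪ {(n, true)}) = partB S false ∪ {(n, false)} := by
  have hlk : (lk Γ n)ᶜ = ((st Γ (vx S))ᶜ : Set V) ∪ {n} := by
    rw [lk_eq_st_diff n, h]
    ext w
    simp only [Set.mem_compl_iff, Set.mem_diff, Set.mem_union, Set.mem_singleton_iff]
    tauto
  ext x
  simp only [pstar, Set.mem_diff, Set.mem_compl_iff, Set.mem_union, Set.mem_singleton_iff]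
  constructor
  · rintro ⟨h1, h2⟩
    have hx1 : x.1 ∈ (lk Γ n)ᶜ := h1
    rw [hlk] at hx1
    rcases hx1 with hx1 | hx1
    · -- x.1 away from star
      have hmat : x ∈ pm ((st Γ (vx S))ᶜ) := hx1
      by_cases hO : x ∈ partB S true
      · exact absurd (Or.inl hO) h2
      · exact Or.inl (by simpa using partB_compl S hmat true hO)
    · -- x.1 = n
      right
      have hx2 : x = (n, x.2) := Prod.ext_iff.mpr ⟨hx1, rfl⟩
      cases hε : x.2
      · rw [hx2, hε]
      · exfalso
        rw [hx2, hε] at h2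
        exact h2 (Or.inr rfl)
  · rintro (h1 | h1)
    · constructor
      · show x.1 ∉ lk Γ n
        have hgoal : x.1 ∈ (lk Γ n)ᶜ := by
          rw [hlk]
          left
          exact partB_subset_mat S false h1
        exact hgoal
      · rintro (h2 | h2)
        · have := partB_disjoint S
          exact Set.eq_empty_iff_forall_notMem.mp this x ⟨h2, h1⟩
        · have := partB_subset_mat S false h1
          rw [Set.mem_singleton_iff.mp h2] at this
          exact this (by show n ∈ st Γ (vx S); rw [← h]; exact self_mem_st n)
    · rw [h1]
      refine ⟨?_, ?_⟩
      · show n ∉ lk Γ n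
        exact self_notMem_lk n
      · rintro (h2 | h2)
        · exact (partB_subset_mat S true h2) (by show n ∈ st Γ (vx S); rw [← h]; exact self_mem_st n)
        · simpa using congrArg Prod.snd (Set.mem_singleton_iff.mp h2)

noncomputable def rebase [Fintype V] (S : GWPartition Γ) (n : V)
    (h : st Γ n = st Γ (vx S)) : GWPartition Γ where
  base := (n, true)
  P := partB S true ∪ {(n, true)}
  hP := rebase_gws S n h true
  hPstar := by
    rw [rebase_pstar_eq S n h]
    exact rebase_gws S n h false
  thickP := by
    obtain ⟨y, hy⟩ := partB_nonempty S true
    have hyn : y ≠ ((n, true) : Vpm V) := by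
      intro hc
      exact (partB_subset_mat S true hy)
        (by rw [hc]; show n ∈ st Γ (vx S); rw [← h]; exact self_mem_st n)
    have h1 : 1 < (partB S true ∪ {((n, true) : Vpm V)} : Set (Vpm V)).ncard :=
      (Set.one_lt_ncard_iff (Set.toFinite _)).mpr ⟨y, (n, true), Or.inl hy, Or.inr rfl, hyn⟩
    omega
  thickPstar := by
    rw [rebase_pstar_eq S n h]
    obtain ⟨y, hy⟩ := partB_nonempty S false
    have hyn : y ≠ ((n, false) : Vpm V) := by
      intro hc
      exact (partB_subset_mat S false hy)
        (by rw [hc]; show n ∈ st Γ (vx S); rw [← h]; exact self_mem_st n)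
    have h1 : 1 < (partB S false ∪ {((n, false) : Vpm V)} : Set (Vpm V)).ncard :=
      (Set.one_lt_ncard_iff (Set.toFinite _)).mpr ⟨y, (n, false), Or.inl hy, Or.inr rfl, hyn⟩
    omega

end Aux5
section Aux6

variable {V : Type*} [Fintype V] {Γ : SimpleGraph V}

lemma vx_rebase (S : GWPartition Γ) (n : V) (h : st Γ n = st Γ (vx S)) :
    vx (rebase S n h) = n := rfl

lemma sideB_rebase (S : GWPartition Γ) (n : V) (h : st Γ n = st Γ (vx S)) (ε : Bool) :
    sideB (rebase S n h) ε = partB S ε ∪ {(n, ε)} := by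
  unfold sideB
  show (if ε = true then _ else _) = _
  cases ε
  · rw [if_neg (by simp)]
    show pstar Γ ((n, true) : Vpm V) (partB S true ∪ {(n, true)}) = _
    exact rebase_pstar_eq S n h
  · rw [if_pos rfl]
    rfl

lemma partB_rebase (S : GWPartition Γ) (n : V) (h : st Γ n = st Γ (vx S)) (ε : Bool) :
    partB (rebase S n h) ε = partB S ε := by
  unfold partB
  rw [sideB_rebase]
  ext x
  simp only [Set.mem_setOf_eq, Set.mem_union, Set.mem_singleton_iff, vx_rebase]
  constructor
  · rintro ⟨hx | hx, hne⟩
    · exact hx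
    · exact absurd (congrArg Prod.fst hx) hne
  · intro hx
    refine ⟨Or.inl hx, ?_⟩
    intro hc
    exact (partB_subset_mat S ε hx) (by rw [hc]; show n ∈ st Γ (vx S); rw [← h]; exact self_mem_st n)

lemma sidesOf_rebase (S : GWPartition Γ) (n : V) (h : st Γ n = st Γ (vx S)) :
    sidesOf (rebase S n h) = {partB S true ∪ {((n, true) : Vpm V)}, partB S false ∪ {(n, false)}} := by
  rw [sidesOf_eq_sideB, sideB_rebase, sideB_rebase]

lemma rebase_self_sides (S : GWPartition Γ) (h : st Γ (vx S) = st Γ (vx S)) :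
    sidesOf (rebase S (vx S) h) = sidesOf S := by
  rw [sidesOf_rebase, sidesOf_eq_sideB, sideB_eq_partB S true, sideB_eq_partB S false]

/-- weak compatibility of non-adjacent-based partitions yields disjoint sides -/
lemma disj_of_weak {Pa Qa : GWPartition Γ} (h : WeakCompatible Pa Qa)
    (hna : ¬ Γ.Adj (vx Pa) (vx Qa)) :
    ∃ ε δ : Bool, sideB Pa ε ∩ sideB Qa δ = ∅ := by
  rcases h with (h | h | h | h) | h
  · exact ⟨Pa.base.2, Qa.base.2, by rw [← P_eq_sideB, ← P_eq_sideB]; exact h⟩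
  · exact ⟨Pa.base.2, !Qa.base.2, by rw [← P_eq_sideB, ← Pstar_eq_sideB]; exact h⟩
  · exact ⟨!Pa.base.2, Qa.base.2, by rw [← Pstar_eq_sideB, ← P_eq_sideB]; exact h⟩
  · exact ⟨!Pa.base.2, !Qa.base.2, by rw [← Pstar_eq_sideB, ← Pstar_eq_sideB]; exact h⟩
  · exact absurd h hna

lemma compat_of_disj {Pa Qa : GWPartition Γ}
    (h : ∃ ε δ : Bool, sideB Pa ε ∩ sideB Qa δ = ∅) : Compatible Pa Qa := by
  obtain ⟨ε, δ, hd⟩ := h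
  left
  rcases sideB_eq_or Pa ε with h1 | h1 <;> rcases sideB_eq_or Qa δ with h2 | h2 <;>
    rw [h1, h2] at hd
  · exact Or.inl hd
  · exact Or.inr (Or.inl hd)
  · exact Or.inr (Or.inr (Or.inl hd))
  · exact Or.inr (Or.inr (Or.inr hd))

/-- same-vertex partitions with some disjoint sides have nested positive parts -/
lemma nested_of_disj {Pa Qa : GWPartition Γ} (hv : vx Pa = vx Qa)
    (h : ∃ ε δ : Bool, sideB Pa ε ∩ sideB Qa δ = ∅) :
    partB Pa true ⊆ partB Qa true ∨ partB Qa true ⊆ partB Pa true := by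
  obtain ⟨ε, δ, hd⟩ := h
  have hmatPQ : pm ((st Γ (vx Pa))ᶜ) = pm ((st Γ (vx Qa))ᶜ) := by rw [hv]
  by_cases hεδ : ε = δ
  · exfalso
    subst hεδ
    have h1 : ((vx Pa, ε) : Vpm V) ∈ sideB Pa ε := base_mem_sideB Pa ε
    have h2 : ((vx Pa, ε) : Vpm V) ∈ sideB Qa ε := by rw [hv]; exact base_mem_sideB Qa ε
    exact Set.eq_empty_iff_forall_notMem.mp hd _ ⟨h1, h2⟩
  · have hδ : δ = !ε := Bool.eq_not_iff.mpr (fun hc => hεδ hc.symm)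
    subst hδ
    have hkey : partB Pa ε ⊆ partB Qa ε := by
      intro x hx
      have hxm : x ∈ pm ((st Γ (vx Qa))ᶜ) := hmatPQ ▸ partB_subset_mat Pa ε hx
      by_cases hQ : x ∈ partB Qa ε
      · exact hQ
      · exfalso
        have := partB_compl Qa hxm ε hQ
        exact Set.eq_empty_iff_forall_notMem.mp hd x ⟨hx.1, this.1⟩
    cases ε
    · -- partB Pa false ⊆ partB Qa false gives reverse inclusion on true
      right
      intro x hx
      have hxm : x ∈ pm ((st Γ (vx Pa))ᶜ) := hmatPQ.symm ▸ partB_subset_mat Qa true hx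
      by_cases hP : x ∈ partB Pa true
      · exact hP
      · exfalso
        have h2 := partB_compl Pa hxm true hP
        have h3 : x ∈ partB Qa false := hkey (by simpa using h2)
        have := partB_disjoint Qa
        exact Set.eq_empty_iff_forall_notMem.mp this x ⟨hx, h3⟩
    · exact Or.inl hkey

/-- positive part and vertex determine the sides -/
lemma sidesOf_eq_of_partB {Pa Qa : GWPartition Γ} (hv : vx Pa = vx Qa)
    (hO : partB Pa true = partB Qa true) : sidesOf Pa = sidesOf Qa := by
  have hmatPQ : pm ((st Γ (vx Pa))ᶜ) = pm ((st Γ (vx Qa))ᶜ) := by rw [hv]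
  have hF : partB Pa false = partB Qa false := by
    apply Set.Subset.antisymm <;> intro x hx
    · have hxm : x ∈ pm ((st Γ (vx Qa))ᶜ) := hmatPQ ▸ partB_subset_mat Pa false hx
      by_cases hQ : x ∈ partB Qa false
      · exact hQ
      · exfalso
        have h2 : x ∈ partB Qa true := by simpa using partB_compl Qa hxm false hQ
        rw [← hO] at h2
        exact Set.eq_empty_iff_forall_notMem.mp (partB_disjoint Pa) x ⟨h2, hx⟩
    · have hxm : x ∈ pm ((st Γ (vx Pa))ᶜ) := hmatPQ.symm ▸ partB_subset_mat Qa false hx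
      by_cases hP : x ∈ partB Pa false
      · exact hP
      · exfalso
        have h2 : x ∈ partB Pa true := by simpa using partB_compl Pa hxm false hP
        rw [hO] at h2
        exact Set.eq_empty_iff_forall_notMem.mp (partB_disjoint Qa) x ⟨h2, hx⟩
  rw [sidesOf_eq_sideB, sidesOf_eq_sideB, sideB_eq_partB, sideB_eq_partB,
    sideB_eq_partB, sideB_eq_partB, hO, hF, hv]

end Aux6
section Aux7

variable {V : Type*} [Fintype V] {Γ : SimpleGraph V}

lemma rebase_compat_same_class {S₁ S₂ : GWPartition Γ} {n p : V}
    (h₁ : st Γ n = st Γ (vx S₁)) (h₂ : st Γ p = st Γ (vx S₂)) (hst : st Γ n = st Γ p)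
    (hO : partB S₁ true ⊆ partB S₂ true ∨ partB S₂ true ⊆ partB S₁ true) :
    Compatible (rebase S₁ n h₁) (rebase S₂ p h₂) := by
  apply compat_of_disj
  have hmat : pm ((st Γ (vx S₁))ᶜ) = pm ((st Γ (vx S₂))ᶜ) := by rw [← h₁, hst, h₂]
  rcases hO with hO | hO
  · refine ⟨true, false, ?_⟩
    rw [sideB_rebase, sideB_rebase]
    apply Set.eq_empty_of_forall_notMem
    rintro x ⟨hx1 | hx1, hx2 | hx2⟩
    · have hx1' : x ∈ partB S₂ true := hO hx1
      exact Set.eq_empty_iff_forall_notMem.mp (partB_disjoint S₂) x ⟨hx1', hx2⟩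
    · exact (partB_subset_mat S₁ true hx1)
        (by rw [Set.mem_singleton_iff.mp hx2]; show p ∈ st Γ (vx S₁); rw [← h₁, hst]; exact self_mem_st p)
    · exact (partB_subset_mat S₂ false hx2)
        (by rw [Set.mem_singleton_iff.mp hx1]; show n ∈ st Γ (vx S₂); rw [← h₂, ← hst]; exact self_mem_st n)
    · rw [Set.mem_singleton_iff.mp hx1] at hx2
      exact absurd (congrArg Prod.snd (Set.mem_singleton_iff.mp hx2)) (by simp)
  · refine ⟨false, true, ?_⟩
    rw [sideB_rebase, sideB_rebase]
    apply Set.eq_empty_of_forall_notMem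
    rintro x ⟨hx1 | hx1, hx2 | hx2⟩
    · have hx2' : x ∈ partB S₁ true := hO hx2
      exact Set.eq_empty_iff_forall_notMem.mp (partB_disjoint S₁) x ⟨hx2', hx1⟩
    · exact (partB_subset_mat S₁ false hx1)
        (by rw [Set.mem_singleton_iff.mp hx2]; show p ∈ st Γ (vx S₁); rw [← h₁, hst]; exact self_mem_st p)
    · exact (partB_subset_mat S₂ true hx2)
        (by rw [Set.mem_singleton_iff.mp hx1]; show n ∈ st Γ (vx S₂); rw [← h₂, ← hst]; exact self_mem_st n)
    · rw [Set.mem_singleton_iff.mp hx1] at hx2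
      exact absurd (congrArg Prod.snd (Set.mem_singleton_iff.mp hx2)) (by simp)

lemma rebase_sides_ne {S₁ S₂ : GWPartition Γ} {n p : V}
    (h₁ : st Γ n = st Γ (vx S₁)) (h₂ : st Γ p = st Γ (vx S₂)) (hp : p ∈ lk Γ n) :
    sidesOf (rebase S₁ n h₁) ≠ sidesOf (rebase S₂ p h₂) := by
  intro hc
  have hmem : ((p, true) : Vpm V) ∈ sideB (rebase S₂ p h₂) true := base_mem_sideB _ true
  have hmem2 : sideB (rebase S₂ p h₂) true ∈ sidesOf (rebase S₂ p h₂) := by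
    rw [sidesOf_eq_sideB]; exact Or.inl rfl
  rw [← hc, sidesOf_eq_sideB] at hmem2
  have hnp : p ≠ n := fun h => self_notMem_lk n (h ▸ hp)
  have : ∀ ε : Bool, ((p, true) : Vpm V) ∉ sideB (rebase S₁ n h₁) ε := by
    intro ε
    rw [sideB_rebase]
    rintro (hx | hx)
    · exact (partB_subset_mat S₁ ε hx)
        (by show p ∈ st Γ (vx S₁); rw [← h₁]; exact lk_subset_st n hp)
    · exact hnp (congrArg Prod.fst (Set.mem_singleton_iff.mp hx))
  rcases hmem2 with h | h
  · exact this true (h ▸ hmem)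
  · exact this false (h ▸ hmem)

/-- key transfer: disjointness of sides of the original pair yields disjointness for
the rebased pair, for non-adjacent distinct classes -/
lemma transfer_disj {S₁ S₂ : GWPartition Γ} {n p : V}
    (h₁ : st Γ n = st Γ (vx S₁)) (h₂ : st Γ p = st Γ (vx S₂))
    (hnp : n ≠ p)
    (hn2 : ¬ Γ.Adj (vx S₂) n) (hn2' : n ≠ vx S₂)
    (hp1 : ¬ Γ.Adj (vx S₁) p) (hp1' : p ≠ vx S₁)
    {ε δ : Bool} (hd : sideB S₁ ε ∩ sideB S₂ δ = ∅) :
    sideB (rebase S₁ n h₁) ε ∩ sideB (rebase S₂ p h₂) δ = ∅ := by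
  rw [sideB_rebase, sideB_rebase]
  have hdm := Set.eq_empty_iff_forall_notMem.mp hd
  -- (n, ε) is not in sideB S₂ δ
  have hkey1 : ((n, ε) : Vpm V) ∉ sideB S₂ δ := by
    by_cases hnn : n = vx S₁
    · intro hc
      exact hdm ((n, ε) : Vpm V) ⟨by rw [hnn]; exact base_mem_sideB S₁ ε, hc⟩
    · intro hc
      -- n and vx S₁ are adjacent (same star, distinct)
      have hadj : Γ.Adj (vx S₁) n := by
        have : n ∈ st Γ (vx S₁) := by rw [← h₁]; exact self_mem_st n
        rcases this with h | h
        · exact h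
        · exact absurd h hnn
      -- vx S₁ not adjacent to vx S₂ and distinct
      have hb1 : (vx S₁ : V) ∈ (lk Γ (vx S₂))ᶜ := by
        intro hc2
        -- vx S₂ adj vx S₁ ⇒ vx S₁ ∈ st n = st (vx S₁)?? derive contradiction:
        -- vx S₂ ∈ lk (vx S₁) ⊆ st (vx S₁) = st n so vx S₂ adj n or = n, both false
        have h3 : (vx S₂ : V) ∈ st Γ n := by
          rw [h₁]
          exact lk_subset_st _ (hc2.symm : Γ.Adj (vx S₁) (vx S₂))
        rcases h3 with h3 | h3
        · exact hn2 (h3.symm)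
        · exact hn2' (h3 : (vx S₂ : V) = n).symm
      have hbn : (n : V) ∈ (lk Γ (vx S₂))ᶜ := fun hc2 => hn2 hc2
      -- block: (n,ε) ∈ sideB S₂ δ would force (vx S₁, ε) ∈ sideB S₂ δ
      have := block_lemma (m := ((vx S₂, δ) : Vpm V)) (d := ε) (sideB_gws S₂ δ) hadj.symm hbn hb1 hc
      exact hdm ((vx S₁, ε) : Vpm V) ⟨base_mem_sideB S₁ ε, this⟩
  have hkey2 : ((p, δ) : Vpm V) ∉ sideB S₁ ε := by
    by_cases hpp : p = vx S₂
    · intro hc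
      exact hdm ((p, δ) : Vpm V) ⟨hc, by rw [hpp]; exact base_mem_sideB S₂ δ⟩
    · intro hc
      have hadj : Γ.Adj (vx S₂) p := by
        have : p ∈ st Γ (vx S₂) := by rw [← h₂]; exact self_mem_st p
        rcases this with h | h
        · exact h
        · exact absurd h hpp
      have hb1 : (vx S₂ : V) ∈ (lk Γ (vx S₁))ᶜ := by
        intro hc2
        have h3 : (vx S₁ : V) ∈ st Γ p := by
          rw [h₂]
          exact lk_subset_st _ (hc2.symm : Γ.Adj (vx S₂) (vx S₁))
        rcases h3 with h3 | h3
        · exact hp1 (h3.symm)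
        · exact hp1' (h3 : (vx S₁ : V) = p).symm
      have hbp : (p : V) ∈ (lk Γ (vx S₁))ᶜ := fun hc2 => hp1 hc2
      have := block_lemma (m := ((vx S₁, ε) : Vpm V)) (d := δ) (sideB_gws S₁ ε) hadj.symm hbp hb1 hc
      exact hdm ((vx S₂, δ) : Vpm V) ⟨this, base_mem_sideB S₂ δ⟩
  apply Set.eq_empty_of_forall_notMem
  rintro x ⟨hx1 | hx1, hx2 | hx2⟩
  · exact hdm x ⟨partB_subset_sideB S₁ ε hx1, partB_subset_sideB S₂ δ hx2⟩
  · rw [Set.mem_singleton_iff.mp hx2] at hx1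
    exact hkey2 (partB_subset_sideB S₁ ε hx1)
  · rw [Set.mem_singleton_iff.mp hx1] at hx2
    exact hkey1 (partB_subset_sideB S₂ δ hx2)
  · rw [Set.mem_singleton_iff.mp hx1] at hx2
    exact hnp (congrArg Prod.fst (Set.mem_singleton_iff.mp hx2))

end Aux7
section Aux8

variable {V : Type*} [Fintype V] {Γ : SimpleGraph V}

lemma lk_eq_of_sides_eq {Pa Qa : GWPartition Γ} (h : sidesOf Pa = sidesOf Qa) :
    lk Γ (vx Pa) = lk Γ (vx Qa) := by
  rw [sidesOf_eq_sideB, sidesOf_eq_sideB] at h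
  have hu : sideB Pa true ∪ sideB Pa false = sideB Qa true ∪ sideB Qa false := by
    rcases Set.pair_eq_pair_iff.mp h with ⟨h1, h2⟩ | ⟨h1, h2⟩
    · rw [h1, h2]
    · rw [h1, h2, Set.union_comm]
  have h2 := (sideB_union Pa).symm.trans (hu.trans (sideB_union Qa))
  have h3 := pm_inj h2
  exact compl_inj_iff.mp h3

lemma rebase_sides_eq_self {S : GWPartition Γ} {n : V} (h : st Γ n = st Γ (vx S))
    (hn : n = vx S) : sidesOf (rebase S n h) = sidesOf S := by
  subst hn
  exact rebase_self_sides S h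

lemma rebase_sides_ne_same_vertex {S₁ S₂ : GWPartition Γ} {n p : V}
    (h₁ : st Γ n = st Γ (vx S₁)) (h₂ : st Γ p = st Γ (vx S₂)) (hnp : n = p)
    (hO : partB S₁ true ≠ partB S₂ true) :
    sidesOf (rebase S₁ n h₁) ≠ sidesOf (rebase S₂ p h₂) := by
  subst hnp
  intro hc
  rw [sidesOf_rebase, sidesOf_rebase] at hc
  have hnot2 : ((n, true) : Vpm V) ∉ partB S₂ false ∪ {((n, false) : Vpm V)} := by
    rintro (hx | hx)
    · exact (partB_subset_mat S₂ false hx)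
        (by show n ∈ st Γ (vx S₂); rw [← h₂]; exact self_mem_st n)
    · exact absurd (congrArg Prod.snd (Set.mem_singleton_iff.mp hx)) (by simp)
  rcases Set.pair_eq_pair_iff.mp hc with ⟨hA, _⟩ | ⟨hA, _⟩
  · apply hO
    ext x
    constructor
    · intro hx
      have hx1 : x ∈ partB S₂ true ∪ {((n, true) : Vpm V)} := hA ▸ Or.inl hx
      rcases hx1 with hx1 | hx1
      · exact hx1
      · exfalso
        apply partB_subset_mat S₁ true hx
        rw [Set.mem_singleton_iff.mp hx1]
        show n ∈ st Γ (vx S₁)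
        rw [← h₁]
        exact self_mem_st n
    · intro hx
      have hx1 : x ∈ partB S₁ true ∪ {((n, true) : Vpm V)} := hA ▸ Or.inl hx
      rcases hx1 with hx1 | hx1
      · exact hx1
      · exfalso
        apply partB_subset_mat S₂ true hx
        rw [Set.mem_singleton_iff.mp hx1]
        show n ∈ st Γ (vx S₂)
        rw [← h₂]
        exact self_mem_st n
  · exact hnot2 (hA ▸ Or.inr rfl)

lemma exists_filter_inj {α : Type*} [DecidableEq α] {s t : Finset α} (h : s.card ≤ t.card) :
    ∃ g : α → α, Set.InjOn g ↑s ∧ ∀ a ∈ s, g a ∈ t := by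
  let f : {x // x ∈ s} → {x // x ∈ t} := fun x => t.equivFin.symm (Fin.castLE h (s.equivFin x))
  have hf : Function.Injective f := by
    intro a b hab
    have h1 := t.equivFin.symm.injective hab
    have h2 := Fin.castLE_injective h h1
    exact s.equivFin.injective h2
  refine ⟨fun a => if ha : a ∈ s then (f ⟨a, ha⟩).1 else a, ?_, ?_⟩
  · intro a ha b hb hab
    have ha' : a ∈ s := ha
    have hb' : b ∈ s := hb
    simp only [dif_pos ha', dif_pos hb'] at hab
    have := hf (Subtype.ext hab)
    exact congrArg Subtype.val this
  · intro a ha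
    simp only [dif_pos ha]
    exact (f ⟨a, ha⟩).2

open scoped Classical in
noncomputable def cntF (C : Finset (GWPartition Γ)) (n : V) : ℕ :=
  (C.filter (fun Ra => vx Ra = n)).card

open scoped Classical in
noncomputable def csetF (C : Finset (GWPartition Γ)) (s : Set V) : Finset V :=
  (C.filter (fun Ra => st Γ (vx Ra) = s)).image vx

open scoped Classical in
noncomputable def tgtF (C : Finset (GWPartition Γ)) (s : Set V) : Option V :=
  if h : (csetF C s).Nonempty then
    some (Classical.choose (Finset.exists_max_image (csetF C s) (cntF C) h))
  else none

noncomputable def tvF (C : Finset (GWPartition Γ)) (Pa : GWPartition Γ) : V :=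
  (tgtF C (st Γ (vx Pa))).getD (vx Pa)

open scoped Classical in
lemma mem_cset_self {C : Finset (GWPartition Γ)} {Pa : GWPartition Γ} (h : Pa ∈ C) :
    vx Pa ∈ csetF C (st Γ (vx Pa)) :=
  Finset.mem_image.mpr ⟨Pa, Finset.mem_filter.mpr ⟨h, rfl⟩, rfl⟩

open scoped Classical in
lemma tgt_spec {C : Finset (GWPartition Γ)} {s : Set V} (h : (csetF C s).Nonempty) :
    ∃ t : V, tgtF C s = some t ∧ t ∈ csetF C s ∧ ∀ b ∈ csetF C s, cntF C b ≤ cntF C t := by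
  have hspec := Classical.choose_spec (Finset.exists_max_image (csetF C s) (cntF C) h)
  refine ⟨_, ?_, hspec.1, hspec.2⟩
  unfold tgtF
  rw [dif_pos h]

lemma tv_spec {C : Finset (GWPartition Γ)} {Pa : GWPartition Γ} (h : Pa ∈ C) :
    tvF C Pa ∈ csetF C (st Γ (vx Pa)) ∧
      ∀ b ∈ csetF C (st Γ (vx Pa)), cntF C b ≤ cntF C (tvF C Pa) := by
  have hne : (csetF C (st Γ (vx Pa))).Nonempty := ⟨vx Pa, mem_cset_self h⟩
  obtain ⟨t, ht1, ht2, ht3⟩ := tgt_spec hne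
  have : tvF C Pa = t := by unfold tvF; rw [ht1]; rfl
  rw [this]
  exact ⟨ht2, ht3⟩

lemma tv_congr {C : Finset (GWPartition Γ)} {Pa Qa : GWPartition Γ} (hPa : Pa ∈ C)
    (hst : st Γ (vx Pa) = st Γ (vx Qa)) : tvF C Pa = tvF C Qa := by
  have hne : (csetF C (st Γ (vx Pa))).Nonempty := ⟨vx Pa, mem_cset_self hPa⟩
  obtain ⟨t, ht1, _, _⟩ := tgt_spec hne
  have h2 : tgtF C (st Γ (vx Qa)) = some t := by rw [← hst]; exact ht1
  unfold tvF
  rw [ht1, h2]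
  rfl

open scoped Classical in
lemma cset_elim {C : Finset (GWPartition Γ)} {s : Set V} {b : V} (h : b ∈ csetF C s) :
    ∃ Ra ∈ C, vx Ra = b ∧ st Γ b = s := by
  obtain ⟨Ra, hRa, hvx⟩ := Finset.mem_image.mp h
  have := Finset.mem_filter.mp hRa
  exact ⟨Ra, this.1, hvx, hvx ▸ this.2⟩

open scoped Classical in
noncomputable def injF (C : Finset (GWPartition Γ)) (n t : V) :
    GWPartition Γ → GWPartition Γ :=
  if h : (C.filter (fun Ra => vx Ra = n)).card ≤ (C.filter (fun Ra => vx Ra = t)).card then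
    Classical.choose (exists_filter_inj h)
  else id

open scoped Classical in
lemma injF_spec {C : Finset (GWPartition Γ)} {n t : V} (h : cntF C n ≤ cntF C t) :
    Set.InjOn (injF C n t) ↑(C.filter (fun Ra => vx Ra = n)) ∧
      ∀ Pa ∈ C.filter (fun Ra => vx Ra = n),
        injF C n t Pa ∈ C.filter (fun Ra => vx Ra = t) := by
  have h' : (C.filter (fun Ra => vx Ra = n)).card ≤ (C.filter (fun Ra => vx Ra = t)).card := h
  have hspec := Classical.choose_spec (exists_filter_inj h')
  unfold injF
  rw [dif_pos h']
  exact hspec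

noncomputable def srcF (C : Finset (GWPartition Γ)) (Pa : GWPartition Γ) : GWPartition Γ :=
  injF C (vx Pa) (tvF C Pa) Pa

open scoped Classical in
lemma srcF_spec {C : Finset (GWPartition Γ)} {Pa : GWPartition Γ} (h : Pa ∈ C) :
    srcF C Pa ∈ C ∧ vx (srcF C Pa) = tvF C Pa ∧
      st Γ (vx (srcF C Pa)) = st Γ (vx Pa) := by
  have hle : cntF C (vx Pa) ≤ cntF C (tvF C Pa) :=
    (tv_spec h).2 (vx Pa) (mem_cset_self h)
  have hmem := (injF_spec hle).2 Pa (Finset.mem_filter.mpr ⟨h, rfl⟩)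
  have h2 := Finset.mem_filter.mp hmem
  have h2' : vx (srcF C Pa) = tvF C Pa := h2.2
  obtain ⟨Ra, hRa, hvx, hstt⟩ := cset_elim (tv_spec h).1
  refine ⟨h2.1, h2', ?_⟩
  rw [h2']
  exact hstt

open scoped Classical in
lemma srcF_injOn {C : Finset (GWPartition Γ)} {Pa Qa : GWPartition Γ} (hPa : Pa ∈ C)
    (hQa : Qa ∈ C) (hv : vx Pa = vx Qa) (heq : srcF C Pa = srcF C Qa) : Pa = Qa := by
  have hst : st Γ (vx Pa) = st Γ (vx Qa) := by rw [hv]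
  have htv : tvF C Pa = tvF C Qa := tv_congr hPa hst
  have hle : cntF C (vx Pa) ≤ cntF C (tvF C Pa) := (tv_spec hPa).2 (vx Pa) (mem_cset_self hPa)
  have hinj := (injF_spec hle).1
  apply hinj (Finset.mem_coe.mpr (Finset.mem_filter.mpr ⟨hPa, rfl⟩))
    (Finset.mem_coe.mpr (Finset.mem_filter.mpr ⟨hQa, hv.symm⟩))
  show injF C (vx Pa) (tvF C Pa) Pa = injF C (vx Pa) (tvF C Pa) Qa
  have : injF C (vx Pa) (tvF C Pa) Qa = srcF C Qa := by
    unfold srcF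
    rw [hv, htv]
  rw [this, ← heq]
  rfl

end Aux8
section Aux9

variable {V : Type*} [Fintype V] {Γ : SimpleGraph V}

lemma weak_to_strong {U : Set V} {k : ℕ} (C : Finset (GWPartition Γ)) (hcard : C.card = k)
    (hbase : ∀ Pa ∈ C, Pa.base.1 ∈ U)
    (hpair : ∀ Pa ∈ C, ∀ Qa ∈ C, Pa ≠ Qa → sidesOf Pa ≠ sidesOf Qa ∧ WeakCompatible Pa Qa) :
    ∃ C' : Finset (GWPartition Γ), C'.card = k ∧ (∀ Pa ∈ C', Pa.base.1 ∈ U) ∧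
      ∀ Pa ∈ C', ∀ Qa ∈ C', Pa ≠ Qa → sidesOf Pa ≠ sidesOf Qa ∧ Compatible Pa Qa := by
  classical
  -- the rebased partition
  have hSmem : ∀ Pa ∈ C, srcF C Pa ∈ C := fun Pa h => (srcF_spec h).1
  have hSvx : ∀ Pa ∈ C, vx (srcF C Pa) = tvF C Pa := fun Pa h => (srcF_spec h).2.1
  have hSst : ∀ Pa ∈ C, st Γ (vx Pa) = st Γ (vx (srcF C Pa)) :=
    fun Pa h => ((srcF_spec h).2.2).symm
  set newP : GWPartition Γ → GWPartition Γ := fun Pa =>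
    if h : st Γ (vx Pa) = st Γ (vx (srcF C Pa)) then rebase (srcF C Pa) (vx Pa) h else Pa
    with hnewP
  have hnew : ∀ Pa (h : Pa ∈ C), newP Pa = rebase (srcF C Pa) (vx Pa) (hSst Pa h) := by
    intro Pa h
    rw [hnewP]
    simp only [dif_pos (hSst Pa h)]
  -- the key pairwise claim
  have key : ∀ Pa ∈ C, ∀ Qa ∈ C, Pa ≠ Qa →
      sidesOf (newP Pa) ≠ sidesOf (newP Qa) ∧ Compatible (newP Pa) (newP Qa) := by
    intro Pa hPa Qa hQa hne
    rw [hnew Pa hPa, hnew Qa hQa]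
    have hS₁C : srcF C Pa ∈ C := hSmem Pa hPa
    have hS₂C : srcF C Qa ∈ C := hSmem Qa hQa
    by_cases hcls : st Γ (vx Pa) = st Γ (vx Qa)
    · -- same class
      have htveq : tvF C Pa = tvF C Qa := tv_congr hPa hcls
      have hvS : vx (srcF C Pa) = vx (srcF C Qa) := by
        rw [hSvx Pa hPa, hSvx Qa hQa, htveq]
      have hOnest : partB (srcF C Pa) true ⊆ partB (srcF C Qa) true ∨
          partB (srcF C Qa) true ⊆ partB (srcF C Pa) true := by
        by_cases hSS : srcF C Pa = srcF C Qa
        · rw [hSS]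
          exact Or.inl subset_rfl
        · have hw := hpair _ hS₁C _ hS₂C hSS
          have hna : ¬ Γ.Adj (vx (srcF C Pa)) (vx (srcF C Qa)) := by
            rw [hvS]
            exact Γ.irrefl
          exact nested_of_disj hvS (disj_of_weak hw.2 hna)
      refine ⟨?_, rebase_compat_same_class _ _ hcls hOnest⟩
      by_cases hv : vx Pa = vx Qa
      · -- same vertex
        have hSS : srcF C Pa ≠ srcF C Qa := by
          intro hSS
          exact hne (srcF_injOn hPa hQa hv hSS)
        have hOne : partB (srcF C Pa) true ≠ partB (srcF C Qa) true := by
          intro hO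
          exact (hpair _ hS₁C _ hS₂C hSS).1 (sidesOf_eq_of_partB hvS hO)
        exact rebase_sides_ne_same_vertex _ _ hv hOne
      · -- distinct adjacent vertices of the same class
        have hadjP : vx Qa ∈ lk Γ (vx Pa) := by
          have h1 : vx Qa ∈ st Γ (vx Pa) := by rw [hcls]; exact self_mem_st _
          rcases h1 with h1 | h1
          · exact h1
          · exact absurd (h1 : vx Qa = vx Pa).symm hv
        exact rebase_sides_ne _ _ hadjP
    · -- distinct classes
      have hv : vx Pa ≠ vx Qa := fun h => hcls (by rw [h])
      by_cases hadj : Γ.Adj (vx Pa) (vx Qa)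
      · refine ⟨rebase_sides_ne _ _ (hadj : vx Qa ∈ lk Γ (vx Pa)), Or.inr ⟨hadj, hcls⟩⟩
      · -- non-adjacent distinct classes
        have hpn : vx Qa ∉ st Γ (vx Pa) := by
          rintro (h | h)
          · exact hadj h
          · exact hv (h : vx Qa = vx Pa).symm
        have hnp : vx Pa ∉ st Γ (vx Qa) := by
          rintro (h | h)
          · exact hadj (h : Γ.Adj (vx Qa) (vx Pa)).symm
          · exact hv (h : vx Pa = vx Qa)
        have hst₁ : st Γ (vx (srcF C Pa)) = st Γ (vx Pa) := (hSst Pa hPa).symm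
        have hst₂ : st Γ (vx (srcF C Qa)) = st Γ (vx Qa) := (hSst Qa hQa).symm
        have hn2 : ¬ Γ.Adj (vx (srcF C Qa)) (vx Pa) := by
          intro h
          apply hnp
          rw [← hst₂]
          exact lk_subset_st _ (h : vx Pa ∈ lk Γ (vx (srcF C Qa)))
        have hn2' : vx Pa ≠ vx (srcF C Qa) := by
          intro h
          apply hcls
          rw [← hst₂, ← h]
        have hp1 : ¬ Γ.Adj (vx (srcF C Pa)) (vx Qa) := by
          intro h
          apply hpn
          rw [← hst₁]
          exact lk_subset_st _ (h : vx Qa ∈ lk Γ (vx (srcF C Pa)))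
        have hp1' : vx Qa ≠ vx (srcF C Pa) := by
          intro h
          apply hcls
          rw [← hst₁, ← h]
        have hSS : srcF C Pa ≠ srcF C Qa := by
          intro h
          apply hcls
          rw [← hst₁, ← hst₂, h]
        have hnaS : ¬ Γ.Adj (vx (srcF C Pa)) (vx (srcF C Qa)) := by
          intro h
          have h2 : vx (srcF C Qa) ∈ st Γ (vx Pa) := by
            rw [← hst₁]
            exact lk_subset_st _ (h : vx (srcF C Qa) ∈ lk Γ (vx (srcF C Pa)))
          rcases h2 with h2 | h2
          · exact hn2 (h2 : Γ.Adj (vx Pa) (vx (srcF C Qa))).symm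
          · exact hn2' (h2 : vx (srcF C Qa) = vx Pa).symm
        have hw := hpair _ hS₁C _ hS₂C hSS
        obtain ⟨ε, δ, hd⟩ := disj_of_weak hw.2 hnaS
        refine ⟨?_, compat_of_disj ⟨ε, δ, transfer_disj _ _ hv hn2 hn2' hp1 hp1' hd⟩⟩
        -- sides differ
        by_cases hlk : lk Γ (vx Pa) = lk Γ (vx Qa)
        · -- classes of both are singletons
          have he1 : vx Pa = vx (srcF C Pa) := by
            by_contra hc
            have h1 : vx (srcF C Pa) ∈ lk Γ (vx Pa) := by
              have h2 : vx (srcF C Pa) ∈ st Γ (vx Pa) := by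
                rw [← hst₁]; exact self_mem_st _
              rcases h2 with h2 | h2
              · exact h2
              · exact absurd (h2 : vx (srcF C Pa) = vx Pa) (fun he => hc he.symm)
            rw [hlk] at h1
            exact hp1 (h1 : Γ.Adj (vx Qa) (vx (srcF C Pa))).symm
          have he2 : vx Qa = vx (srcF C Qa) := by
            by_contra hc
            have h1 : vx (srcF C Qa) ∈ lk Γ (vx Qa) := by
              have h2 : vx (srcF C Qa) ∈ st Γ (vx Qa) := by
                rw [← hst₂]; exact self_mem_st _
              rcases h2 with h2 | h2
              · exact h2
              · exact absurd (h2 : vx (srcF C Qa) = vx Qa) (fun he => hc he.symm)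
            rw [← hlk] at h1
            exact hn2 (h1 : Γ.Adj (vx Pa) (vx (srcF C Qa))).symm
          rw [rebase_sides_eq_self _ he1, rebase_sides_eq_self _ he2]
          exact (hpair _ hS₁C _ hS₂C hSS).1
        · -- links differ
          intro hc
          have h2 := lk_eq_of_sides_eq (Pa := rebase (srcF C Pa) (vx Pa) (hSst Pa hPa))
            (Qa := rebase (srcF C Qa) (vx Qa) (hSst Qa hQa)) hc
          exact hlk h2
  -- assemble
  have hinj : Set.InjOn newP ↑C := by
    intro Pa hPa Qa hQa hne
    by_contra hc
    have := (key Pa hPa Qa hQa hc).1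
    rw [hne] at this
    exact this rfl
  refine ⟨C.image newP, ?_, ?_, ?_⟩
  · rw [Finset.card_image_of_injOn hinj, hcard]
  · intro Pa' h'
    obtain ⟨Pa, hPa, rfl⟩ := Finset.mem_image.mp h'
    rw [hnew Pa hPa]
    exact hbase Pa hPa
  · intro Pa' h1' Qa' h2' hne'
    obtain ⟨Pa, hPa, rfl⟩ := Finset.mem_image.mp h1'
    obtain ⟨Qa, hQa, rfl⟩ := Finset.mem_image.mp h2'
    have hne : Pa ≠ Qa := fun h => hne' (by rw [h])
    exact key Pa hPa Qa hQa hne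

end Aux9

/-- For any set of vertices `U`, the largest size `μ(U)` of a pairwise weakly
compatible collection of `ΓW`-partitions based at elements of `U` equals the largest
size `M(U)` of a pairwise compatible such collection. -/
theorem stmt12 {V : Type*} [Fintype V] (Γ : SimpleGraph V) (U : Set V) :
    Mweak Γ U = M Γ U := by
  have hset : {k : ℕ | ∃ C : Finset (GWPartition Γ), C.card = k ∧ (∀ Pa ∈ C, Pa.base.1 ∈ U) ∧
      (∀ Pa ∈ C, ∀ Qa ∈ C, Pa ≠ Qa → sidesOf Pa ≠ sidesOf Qa ∧ WeakCompatible Pa Qa)} =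
    {k : ℕ | ∃ C : Finset (GWPartition Γ), C.card = k ∧ (∀ Pa ∈ C, Pa.base.1 ∈ U) ∧
      (∀ Pa ∈ C, ∀ Qa ∈ C, Pa ≠ Qa → sidesOf Pa ≠ sidesOf Qa ∧ Compatible Pa Qa)} := by
    ext k
    simp only [Set.mem_setOf_eq]
    constructor
    · rintro ⟨C, h1, h2, h3⟩
      exact weak_to_strong C h1 h2 h3
    · rintro ⟨C, h1, h2, h3⟩
      refine ⟨C, h1, h2, fun Pa hPa Qa hQa hne => ⟨(h3 Pa hPa Qa hQa hne).1, ?_⟩⟩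
      rcases (h3 Pa hPa Qa hQa hne).2 with h | h
      · exact Or.inl h
      · exact Or.inr h.1
  unfold Mweak M
  rw [hset]

end GW
end

section
/- Let m and s be vertices of Γ with m ≁ s (not ∼-equivalent) and with m and s non-adjacent and distinct. If ℛ is a ΓW-partition based at the vertex s that splits some vertex in [m], then lk(m) is strictly contained in lk(s). In particular, if m is principal, then no ΓW-partition based at s splits any vertex of [m], i.e. all of [m]^± lies in a single side of any such partition. -/
namespace GW

variable {V : Type*}

/-!
A partition based at `s` that splits `v` must isolate `v` in `Γ − lk(s)`, so `lk(v) ⊆ lk(s)`;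
since `v ∼ m` and `m ≁ s`, this forces `lk(m) ⊊ lk(s)`. If `m` is principal, there is instead a
vertex `u ∈ lk(m) ∖ lk(s)`, and every vertex of `[m]` is adjacent or equal to `u`, so `[m]` lies
in one component of `Γ − lk(s)`; an unsplit component lies entirely in one side.
-/

variable {Γ : SimpleGraph V}

lemma eqv_refl (v : V) : Eqv Γ v v := ⟨Set.subset_union_left, Set.subset_union_left⟩

lemma eqv_of_lk_eq {u w : V} (h : lk Γ u = lk Γ w) : Eqv Γ u w :=
  ⟨h ▸ Set.subset_union_left, h ▸ Set.subset_union_left⟩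

lemma Principal.lk_eq_of_lk_subset {m w : V} (hm : Principal Γ m) (h : lk Γ m ⊆ lk Γ w) :
    lk Γ m = lk Γ w :=
  h.eq_or_ssubset.resolve_right fun hss => hm ⟨w, hss⟩

lemma lk_ssubset_of_eqv_of_lk_subset {m s v : V} (hms : ¬ Eqv Γ m s) (hmv : Eqv Γ m v)
    (hvs : lk Γ v ⊆ lk Γ s) : lk Γ m ⊂ lk Γ s := by
  have hv : v ∉ lk Γ s := fun h => Γ.irrefl (hvs (Γ.adj_symm h))
  have hsub : lk Γ m ⊆ lk Γ s := by
    intro w hw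
    rcases hmv.1 hw with hwv | rfl
    · exact hvs hwv
    · have hsm : Γ.Adj s m := hvs (Γ.adj_symm hw)
      rcases hmv.1 (Γ.adj_symm hsm) with hsw | rfl
      · exact absurd (Γ.adj_symm hsw) hv
      · exact absurd hmv hms
  exact ssubset_of_subset_of_ne hsub fun h => hms (eqv_of_lk_eq h)

lemma notMem_lk_of_eqv {m s v : V} (hnadj : ¬ Γ.Adj m s) (hms : ¬ Eqv Γ m s)
    (hmv : Eqv Γ m v) : v ∉ lk Γ s := by
  intro hv
  rcases hmv.2 (Γ.adj_symm hv) with hsm | rfl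
  · exact hnadj hsm
  · exact hms (eqv_refl _)

lemma SameComp.trans {b u w x : V} (h : SameComp Γ b u w) (h' : SameComp Γ b w x) :
    SameComp Γ b u x := by
  obtain ⟨hu, _, hr⟩ := h
  obtain ⟨_, hx, hr'⟩ := h'
  exact ⟨hu, hx, hr.trans hr'⟩

lemma sameComp_of_adj {b u w : V} (hu : u ∉ lk Γ b) (hw : w ∉ lk Γ b) (h : Γ.Adj u w) :
    SameComp Γ b u w :=
  ⟨hu, hw, SimpleGraph.Adj.reachable (by simpa using h)⟩

lemma lk_subset_of_comp_eq_singleton {b v : V} (h : comp Γ b v = {v}) : lk Γ v ⊆ lk Γ b := by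
  obtain ⟨hv, -⟩ : v ∈ comp Γ b v := h ▸ rfl
  intro w hw
  by_contra hwb
  have hw' : w ∈ comp Γ b v := sameComp_of_adj hv hwb hw
  rw [h] at hw'
  exact Γ.ne_of_adj hw hw'.symm

lemma sameComp_of_eqv {b m u v : V} (hum : u ∈ lk Γ m) (hub : u ∉ lk Γ b) (hmb : m ∉ lk Γ b)
    (hvb : v ∉ lk Γ b) (hmv : Eqv Γ m v) : SameComp Γ b m v := by
  have hmu : SameComp Γ b m u := sameComp_of_adj hmb hub hum
  rcases hmv.1 hum with huv | rfl
  · exact hmu.trans (sameComp_of_adj hub hvb (Γ.adj_symm huv))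
  · exact hmu

lemma GWSubset.comp_eq_singleton {b x : Vpm V} {P : Set (Vpm V)} (hP : GWSubset Γ b P)
    (hx : x ∈ P) (hx' : pinv x ∉ P) : comp Γ b.1 x.1 = {x.1} := by
  obtain ⟨U, hU, hxU, hUP⟩ := hP.2.2 x hx
  rcases hU with ⟨u, hcomp, rfl | rfl⟩ | ⟨u, -, -, rfl⟩
  · rw [Set.mem_singleton_iff.mp hxU]; exact hcomp
  · rw [Set.mem_singleton_iff.mp hxU]; exact hcomp
  · exact absurd (hUP (show pinv x ∈ pm (comp Γ b.1 u) from hxU)) hx'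

lemma GWSubset.pm_comp_subset {b x : Vpm V} {P : Set (Vpm V)} (hP : GWSubset Γ b P)
    (hx : x ∈ P) (hx' : pinv x ∈ P) : pm (comp Γ b.1 x.1) ⊆ P := by
  obtain ⟨U, hU, hxU, hUP⟩ := hP.2.2 x hx
  rintro ⟨w, t⟩ (hw : w ∈ comp Γ b.1 x.1)
  rcases hU with ⟨u, hcomp, rfl | rfl⟩ | ⟨u, -, -, rfl⟩
  · obtain rfl := Set.mem_singleton_iff.mp hxU
    obtain rfl : w = u := by simpa [hcomp] using hw
    cases t; exacts [hx', hx]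
  · obtain rfl := Set.mem_singleton_iff.mp hxU
    obtain rfl : w = u := by simpa [hcomp] using hw
    cases t; exacts [hx, hx']
  · exact hUP (SameComp.trans hxU hw)

lemma GWPartition.comp_eq_singleton_of_splits (Ra : GWPartition Γ) {v : V} (h : Splits Ra v) :
    comp Γ Ra.base.1 v = {v} := by
  rcases h with ⟨hP, -, hP'⟩ | ⟨hP, -, hP'⟩
  · exact Ra.hP.comp_eq_singleton (x := (v, true)) hP hP'
  · exact Ra.hP.comp_eq_singleton (x := (v, false)) hP hP'

lemma GWPartition.same_side_of_not_splits (Ra : GWPartition Γ) {v : V}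
    (hv : v ∉ lk Γ Ra.base.1) (h : ¬ Splits Ra v) :
    ((v, true) ∈ Ra.P ∧ (v, false) ∈ Ra.P) ∨ ((v, true) ∈ Ra.Pstar ∧ (v, false) ∈ Ra.Pstar) := by
  have hstar : ∀ t, (v, t) ∈ Ra.Pstar ↔ (v, t) ∉ Ra.P := fun t => and_iff_right hv
  simp only [Splits, hstar] at h ⊢
  tauto

theorem stmt13_general {V : Type*} (Γ : SimpleGraph V) (m s : V)
    (hne : ¬ Eqv Γ m s) (hnadj : ¬ Γ.Adj m s)
    (Ra : GWPartition Γ) (hbase : BasedAtVtx Ra s) :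
    (∀ v : V, Eqv Γ m v → Splits Ra v → lk Γ m ⊂ lk Γ s) ∧
    (Principal Γ m →
      (∀ v : V, Eqv Γ m v → ¬ Splits Ra v) ∧
      ((∀ x : Vpm V, Eqv Γ m x.1 → x ∈ Ra.P) ∨
        (∀ x : Vpm V, Eqv Γ m x.1 → x ∈ Ra.Pstar))) := by
  obtain ⟨hlk, -⟩ := hbase
  have hsplit : ∀ v, Eqv Γ m v → Splits Ra v → lk Γ m ⊂ lk Γ s := fun v hv h =>
    lk_ssubset_of_eqv_of_lk_subset hne hv
      (hlk ▸ lk_subset_of_comp_eq_singleton (Ra.comp_eq_singleton_of_splits h))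
  refine ⟨hsplit, fun hm => ?_⟩
  have hnsplit : ∀ v, Eqv Γ m v → ¬ Splits Ra v := fun v hv h => hm ⟨s, hsplit v hv h⟩
  obtain ⟨u, hum, hus⟩ := Set.not_subset.mp fun h => hne (eqv_of_lk_eq (hm.lk_eq_of_lk_subset h))
  have hout : ∀ v, Eqv Γ m v → v ∉ lk Γ Ra.base.1 := fun v hv =>
    hlk ▸ notMem_lk_of_eqv hnadj hne hv
  have hcomp : ∀ x : Vpm V, Eqv Γ m x.1 → x ∈ pm (comp Γ Ra.base.1 m) := fun x hx =>
    sameComp_of_eqv hum (hlk ▸ hus) (hout m (eqv_refl m)) (hout x.1 hx) hx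
  refine ⟨hnsplit, ?_⟩
  rcases Ra.same_side_of_not_splits (hout m (eqv_refl m)) (hnsplit m (eqv_refl m)) with
    ⟨h, h'⟩ | ⟨h, h'⟩
  · exact Or.inl fun x hx => Ra.hP.pm_comp_subset h h' (hcomp x hx)
  · exact Or.inr fun x hx => Ra.hPstar.pm_comp_subset h h' (hcomp x hx)

/-- Let `m` and `s` be non-equivalent, non-adjacent, distinct vertices.  If a
`ΓW`-partition `Ra` based at the vertex `s` splits some vertex of `[m]`, then
`lk(m) ⊊ lk(s)`.  In particular, if `m` is principal then `Ra` splits no vertex of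
`[m]` and all of `[m]^±` lies in a single side of `Ra`. -/
theorem stmt13 {V : Type*} [Fintype V] (Γ : SimpleGraph V) (m s : V)
    (hne : ¬ Eqv Γ m s) (hnadj : ¬ Γ.Adj m s) (hms : m ≠ s)
    (Ra : GWPartition Γ) (hbase : BasedAtVtx Ra s) :
    (∀ v : V, Eqv Γ m v → Splits Ra v → lk Γ m ⊂ lk Γ s) ∧
    (Principal Γ m →
      (∀ v : V, Eqv Γ m v → ¬ Splits Ra v) ∧
      ((∀ x : Vpm V, Eqv Γ m x.1 → x ∈ Ra.P) ∨
        (∀ x : Vpm V, Eqv Γ m x.1 → x ∈ Ra.Pstar))) :=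
  stmt13_general Γ m s hne hnadj Ra hbase

end GW
end
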